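/- Let z₁,…,zₙ be nonzero complex numbers and let w̃ ∈ {1,-1}ⁿ maximize |∑ᵢ wᵢ zᵢ| over all w ∈ {1,-1}ⁿ, with s̃ = ∑ᵢ w̃ᵢ zᵢ ≠ 0. Then no zᵢ lies on the line through the origin perpendicular to s̃, i.e., Re(s̃ · conj(zᵢ)) ≠ 0 for all i. -/

import Mathlib

theorem stmt1 (n : ℕ) (z : Fin n → ℂ) (hz : ∀ i, z i ≠ 0)
    (w : Fin n → ℝ) (hw : ∀ i, w i = 1 ∨ w i = -1)
    (hopt : ∀ v : Fin n → ℝ, (∀ i, v i = 1 ∨ v i = -1) →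
      ‖∑ i, (v i : ℂ) * z i‖ ≤ ‖∑ i, (w i : ℂ) * z i‖)
    (hs : (∑ i, (w i : ℂ) * z i) ≠ 0) :
    ∀ i, ((∑ j, (w j : ℂ) * z j) * (starRingEnd ℂ) (z i)).re ≠ 0 := by
  intro i hre
  set s := ∑ j, (w j : ℂ) * z j with hs_def
  set v : Fin n → ℝ := fun j => if j = i then -w j else w j with hv_def
  have hv1 : ∀ j, v j = 1 ∨ v j = -1 := by
    intro j
    simp only [hv_def]
    rcases hw j with h | h <;> split <;> simp [h]
  have hsum : ∑ j, (v j : ℂ) * z j = s - 2 * w i * z i := by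
    have : ∀ j ∈ Finset.univ, (v j : ℂ) * z j
        = (w j : ℂ) * z j - (if j = i then 2 * (w i : ℂ) * z i else 0) := by
      intro j _
      simp only [hv_def]
      split
      · subst j; push_cast; ring
      · simp
    rw [Finset.sum_congr rfl this, Finset.sum_sub_distrib, Finset.sum_ite_eq' Finset.univ i]
    simp [hs_def]
  have hle := hopt v hv1
  rw [hsum] at hle
  have hsq : Complex.normSq (s - 2 * w i * z i) ≤ Complex.normSq s := by
    have := mul_self_le_mul_self (norm_nonneg _) hle
    simpa [← Complex.sq_norm, sq] using this
  have hns : Complex.normSq (s - 2 * w i * z i)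
      = Complex.normSq s + Complex.normSq (2 * w i * z i)
        - 2 * (s * (starRingEnd ℂ) (2 * w i * z i)).re := Complex.normSq_sub _ _
  have hconj : (s * (starRingEnd ℂ) (2 * (w i : ℂ) * z i)).re = 0 := by
    have : (s * (starRingEnd ℂ) (2 * (w i : ℂ) * z i))
        = (2 * w i : ℝ) * (s * (starRingEnd ℂ) (z i)) := by
      push_cast
      rw [map_mul, map_mul]
      simp [Complex.conj_ofReal, map_ofNat]
      ring
    rw [this, Complex.re_ofReal_mul, hre, mul_zero]
  have hw2 : (w i) ^ 2 = 1 := by rcases hw i with h | h <;> simp [h]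
  have hnz : Complex.normSq (2 * w i * z i) > 0 := by
    have : Complex.normSq (2 * (w i : ℂ) * z i) = 4 * (w i ^ 2) * Complex.normSq (z i) := by
      have h2 : Complex.normSq 2 = 4 := by norm_num [Complex.normSq_apply]
      rw [Complex.normSq_mul, Complex.normSq_mul, Complex.normSq_ofReal, h2]
      ring
    rw [this, hw2]
    have := Complex.normSq_pos.mpr (hz i)
    linarith
  rw [hns, hconj] at hsq
  linarith
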